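/- Let p ∈ C_q(X,X,A,A) be a synchronous quantum correlation and let S = (H_A, H_B, {M^x_a}, {N^y_b}, |ψ⟩) be any quantum model for p. Then (M^x_a ⊗ Id)|ψ⟩ = (Id ⊗ N^x_a)|ψ⟩ for all x ∈ X and a ∈ A. If in addition |ψ⟩ is full-rank (its Schmidt rank equals dim H_A = dim H_B), then S is a projective quantum model. -/

import Mathlib

open scoped Matrix Kronecker ComplexOrder

noncomputable section

namespace SelfTestPaper

/-- A finite-dimensional (POVM) quantum model for a bipartite Bell scenario:
Hilbert spaces `ℂ^dA`, `ℂ^dB`, POVMs `{M x a}` and `{N y b}`, and a unit vector `ψ`. -/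
structure QModel (X Y A B : Type) [Fintype A] [Fintype B] where
  dA : ℕ
  dB : ℕ
  M : X → A → Matrix (Fin dA) (Fin dA) ℂ
  N : Y → B → Matrix (Fin dB) (Fin dB) ℂ
  ψ : Fin dA × Fin dB → ℂ
  M_pos : ∀ x a, (M x a).PosSemidef
  M_sum : ∀ x, ∑ a, M x a = 1
  N_pos : ∀ y b, (N y b).PosSemidef
  N_sum : ∀ y, ∑ b, N y b = 1
  ψ_unit : ∑ i, star (ψ i) * ψ i = 1

variable {X Y A B : Type} [Fintype A] [Fintype B]

/-- Inner product `⟨v, w⟩` (antilinear in the first argument). -/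
def qInner {n : Type} [Fintype n] (v w : n → ℂ) : ℂ := ∑ i, star (v i) * w i

/-- The model `S` realizes the correlation `p`:
`p(a,b|x,y) = ⟨ψ|(M^x_a ⊗ N^y_b)|ψ⟩`. -/
def Realizes (S : QModel X Y A B) (p : A → B → X → Y → ℝ) : Prop :=
  ∀ a b x y, qInner S.ψ ((S.M x a ⊗ₖ S.N y b).mulVec S.ψ) = (p a b x y : ℂ)

/-- The set `C_q(X,Y,A,B)` of quantum correlations. -/
def CqSet (X Y A B : Type) [Fintype A] [Fintype B] : Set (A → B → X → Y → ℝ) :=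
  {p | ∃ S : QModel X Y A B, Realizes S p}

/-- `Dilates S St` means `S ⪰ St`, i.e. `St` is a local dilation of `S`:
there are auxiliary spaces, a unit auxiliary state and local isometries `IA`, `IB` with
`(IA ⊗ IB)(M^x_a ⊗ N^y_b)|ψ⟩ = (M̃^x_a ⊗ Ñ^y_b |ψ̃⟩) ⊗ |aux⟩` (written pointwise, under the
identification `(H̃_A ⊗ H_A^aux) ⊗ (H̃_B ⊗ H_B^aux) ≅ (H̃_A ⊗ H̃_B) ⊗ (H_A^aux ⊗ H_B^aux)`). -/
def Dilates (S St : QModel X Y A B) : Prop :=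
  ∃ (eA eB : ℕ) (aux : Fin eA × Fin eB → ℂ)
    (IA : Matrix (Fin St.dA × Fin eA) (Fin S.dA) ℂ)
    (IB : Matrix (Fin St.dB × Fin eB) (Fin S.dB) ℂ),
    IAᴴ * IA = 1 ∧ IBᴴ * IB = 1 ∧ (∑ i, star (aux i) * aux i) = 1 ∧
    ∀ (x : X) (a : A) (y : Y) (b : B) (i : Fin St.dA) (k : Fin eA) (j : Fin St.dB) (l : Fin eB),
      ((IA ⊗ₖ IB).mulVec ((S.M x a ⊗ₖ S.N y b).mulVec S.ψ)) ((i, k), (j, l))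
        = ((St.M x a ⊗ₖ St.N y b).mulVec St.ψ) (i, j) * aux (k, l)

/-- `p` is a self-test for the class `C`: some ideal model in `C` realizes `p` and is a
local dilation of every model for `p` in `C`. -/
def SelfTestFor (C : Set (QModel X Y A B)) (p : A → B → X → Y → ℝ) : Prop :=
  ∃ St ∈ C, Realizes St p ∧ ∀ S ∈ C, Realizes S p → Dilates S St

/-- Word value `⟨ψ| M^{x₁}_{a₁} ⋯ M^{x_k}_{a_k} ⊗ N^{y₁}_{b₁} ⋯ N^{y_ℓ}_{b_ℓ} |ψ⟩`. -/
def wordValue (S : QModel X Y A B) (wA : List (X × A)) (wB : List (Y × B)) : ℂ :=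
  qInner S.ψ ((((wA.map fun q => S.M q.1 q.2).prod) ⊗ₖ
    ((wB.map fun q => S.N q.1 q.2).prod)).mulVec S.ψ)

/-- `S` and `S'` define the same abstract state: all their word values coincide. -/
def SameState (S S' : QModel X Y A B) : Prop :=
  ∀ wA wB, wordValue S wA wB = wordValue S' wA wB

/-- Reduced density matrix of `ψ` on the first tensor factor. -/
def redA {m n : ℕ} (ψ : Fin m × Fin n → ℂ) : Matrix (Fin m) (Fin m) ℂ :=
  Matrix.of fun i i' => ∑ j, ψ (i, j) * star (ψ (i', j))

/-- Reduced density matrix of `ψ` on the second tensor factor. -/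
def redB {m n : ℕ} (ψ : Fin m × Fin n → ℂ) : Matrix (Fin n) (Fin n) ℂ :=
  Matrix.of fun j j' => ∑ i, ψ (i, j) * star (ψ (i, j'))

/-- `P` is the orthogonal projection onto the range (support) of the positive
semidefinite matrix `ρ`. -/
def IsSupportProjection {n : Type} [Fintype n] [DecidableEq n] (ρ P : Matrix n n ℂ) : Prop :=
  P.IsHermitian ∧ P * P = P ∧ P * ρ = ρ ∧ ∀ v, ρ.mulVec v = 0 → P.mulVec v = 0

/-- `S` is centrally supported: the support projections of `ψ` commute with all
measurement operators. -/
def CentrallySupported (S : QModel X Y A B) : Prop :=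
  ∃ PA PB, IsSupportProjection (redA S.ψ) PA ∧ IsSupportProjection (redB S.ψ) PB ∧
    (∀ x a, PA * S.M x a = S.M x a * PA) ∧ (∀ y b, PB * S.N y b = S.N y b * PB)

/-- `S` is full-rank: both support projections of `ψ` are the identity, i.e. the reduced
density matrices have trivial kernel. -/
def FullRank (S : QModel X Y A B) : Prop :=
  (∀ v, (redA S.ψ).mulVec v = 0 → v = 0) ∧ (∀ v, (redB S.ψ).mulVec v = 0 → v = 0)

/-- `S` is projective: all measurement operators are self-adjoint projections. -/
def Projective (S : QModel X Y A B) : Prop :=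
  (∀ x a, (S.M x a).IsHermitian ∧ S.M x a * S.M x a = S.M x a) ∧
  (∀ y b, (S.N y b).IsHermitian ∧ S.N y b * S.N y b = S.N y b)

/-- `St` is locally equivalent to a submodel of `S`, expressed via local isometries
`VA`, `VB` whose range projections `VA * VAᴴ`, `VB * VBᴴ` commute with the measurements. -/
def EquivToSubmodel (S St : QModel X Y A B) : Prop :=
  ∃ (VA : Matrix (Fin S.dA) (Fin St.dA) ℂ) (VB : Matrix (Fin S.dB) (Fin St.dB) ℂ) (lam : ℂ),
    lam ≠ 0 ∧ VAᴴ * VA = 1 ∧ VBᴴ * VB = 1 ∧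
    (∀ x a, (VA * VAᴴ) * S.M x a = S.M x a * (VA * VAᴴ)) ∧
    (∀ y b, (VB * VBᴴ) * S.N y b = S.N y b * (VB * VBᴴ)) ∧
    (∀ x a, St.M x a = VAᴴ * S.M x a * VA) ∧
    (∀ y b, St.N y b = VBᴴ * S.N y b * VB) ∧
    (VAᴴ ⊗ₖ VBᴴ).mulVec S.ψ = lam • St.ψ

/-- A class of models is closed if it is closed under passing to models locally
equivalent to submodels. -/
def ClosedClass (C : Set (QModel X Y A B)) : Prop :=
  ∀ S ∈ C, ∀ St, EquivToSubmodel S St → St ∈ C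

/-- `p` is an abstract state self-test for `C`: `C` contains a model for `p`, and any two
models for `p` in `C` define the same abstract state. -/
def AbstractSelfTestFor (C : Set (QModel X Y A B)) (p : A → B → X → Y → ℝ) : Prop :=
  (∃ S ∈ C, Realizes S p) ∧
  ∀ S ∈ C, ∀ S' ∈ C, Realizes S p → Realizes S' p → SameState S S'

/-- `Sp` is the support model of `S`, presented via isometries `VA`, `VB` onto the
supports of `ψ` (so `VA * VAᴴ`, `VB * VBᴴ` are the support projections). -/
def IsSupportModel (S Sp : QModel X Y A B) : Prop :=
  ∃ (VA : Matrix (Fin S.dA) (Fin Sp.dA) ℂ) (VB : Matrix (Fin S.dB) (Fin Sp.dB) ℂ),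
    VAᴴ * VA = 1 ∧ VBᴴ * VB = 1 ∧
    IsSupportProjection (redA S.ψ) (VA * VAᴴ) ∧
    IsSupportProjection (redB S.ψ) (VB * VBᴴ) ∧
    (∀ x a, Sp.M x a = VAᴴ * S.M x a * VA) ∧
    (∀ y b, Sp.N y b = VBᴴ * S.N y b * VB) ∧
    (VAᴴ ⊗ₖ VBᴴ).mulVec S.ψ = Sp.ψ

/-- The associated representation of `S` is irreducible: every matrix commuting with all
`M^x_a ⊗ Id` and `Id ⊗ N^y_b` is a scalar multiple of the identity. -/
def IrreducibleModel (S : QModel X Y A B) : Prop :=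
  ∀ T : Matrix (Fin S.dA × Fin S.dB) (Fin S.dA × Fin S.dB) ℂ,
    (∀ x a, T * (S.M x a ⊗ₖ (1 : Matrix (Fin S.dB) (Fin S.dB) ℂ))
      = (S.M x a ⊗ₖ (1 : Matrix (Fin S.dB) (Fin S.dB) ℂ)) * T) →
    (∀ y b, T * ((1 : Matrix (Fin S.dA) (Fin S.dA) ℂ) ⊗ₖ S.N y b)
      = ((1 : Matrix (Fin S.dA) (Fin S.dA) ℂ) ⊗ₖ S.N y b) * T) →
    ∃ c : ℂ, T = c • (1 : Matrix (Fin S.dA × Fin S.dB) (Fin S.dA × Fin S.dB) ℂ)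



section Statement15Aux

open Matrix

lemma st15_kron_conjT {m n p q : Type} [Fintype m] [Fintype n]
    (A : Matrix m p ℂ) (B : Matrix n q ℂ) : (A ⊗ₖ B)ᴴ = Aᴴ ⊗ₖ Bᴴ := by
  ext ⟨i, j⟩ ⟨k, l⟩
  simp [Matrix.conjTranspose_apply, Matrix.kroneckerMap_apply, star_mul']

lemma st15_kron_psd {m n : Type} [Fintype m] [Fintype n] [DecidableEq m] [DecidableEq n]
    {A : Matrix m m ℂ} {B : Matrix n n ℂ} (hA : A.PosSemidef) (hB : B.PosSemidef) :
    (A ⊗ₖ B).PosSemidef := by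
  obtain ⟨C, rfl⟩ : ∃ C : Matrix m m ℂ, A = Cᴴ * C := by
    open scoped MatrixOrder in exact CStarAlgebra.nonneg_iff_eq_star_mul_self.mp hA.nonneg
  obtain ⟨D, rfl⟩ : ∃ D : Matrix n n ℂ, B = Dᴴ * D := by
    open scoped MatrixOrder in exact CStarAlgebra.nonneg_iff_eq_star_mul_self.mp hB.nonneg
  rw [Matrix.mul_kronecker_mul, ← st15_kron_conjT]
  exact Matrix.posSemidef_conjTranspose_mul_self _

lemma st15_sum_mulVec {ι m n : Type} [Fintype ι] [Fintype n]
    (f : ι → Matrix m n ℂ) (v : n → ℂ) :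
    (∑ i, f i).mulVec v = ∑ i, (f i).mulVec v := by
  ext j
  simp only [Matrix.mulVec, dotProduct, Matrix.sum_apply, Finset.sum_apply,
    Finset.sum_mul]
  exact Finset.sum_comm

lemma st15_kron_sum {ι m n : Type} [Fintype ι]
    (A : Matrix m m ℂ) (N : ι → Matrix n n ℂ) :
    A ⊗ₖ (∑ b, N b) = ∑ b, A ⊗ₖ N b := by
  ext ⟨i, j⟩ ⟨k, l⟩
  simp [Matrix.kroneckerMap_apply, Matrix.sum_apply, Finset.mul_sum]

lemma st15_sum_kron {ι m n : Type} [Fintype ι]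
    (M : ι → Matrix m m ℂ) (B : Matrix n n ℂ) :
    (∑ a, M a) ⊗ₖ B = ∑ a, M a ⊗ₖ B := by
  ext ⟨i, j⟩ ⟨k, l⟩
  simp [Matrix.kroneckerMap_apply, Matrix.sum_apply, Finset.sum_mul]

end Statement15Aux

/-- For a synchronous correlation `p`, every quantum model satisfies
`(M^x_a ⊗ Id)|ψ⟩ = (Id ⊗ N^x_a)|ψ⟩`; if moreover the model is full-rank, it is projective. -/
theorem statement15 {X A : Type} [Fintype A]
    (p : A → A → X → X → ℝ)
    (hsync : ∀ (x : X) (a b : A), a ≠ b → p a b x x = 0)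
    (S : QModel X X A A) (hS : Realizes S p) :
    (∀ (x : X) (a : A),
      (S.M x a ⊗ₖ (1 : Matrix (Fin S.dB) (Fin S.dB) ℂ)).mulVec S.ψ
        = ((1 : Matrix (Fin S.dA) (Fin S.dA) ℂ) ⊗ₖ S.N x a).mulVec S.ψ)
    ∧ (FullRank S → Projective S) := by
  classical
  have h0 : ∀ (x : X) (a b : A), a ≠ b → (S.M x a ⊗ₖ S.N x b).mulVec S.ψ = 0 := by
    intro x a b hab
    refine ((st15_kron_psd (S.M_pos x a) (S.N_pos x b)).dotProduct_mulVec_zero_iff S.ψ).mp ?_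
    have h := hS a b x x
    rw [hsync x a b hab] at h
    simpa [qInner, dotProduct] using h
  have hMN : ∀ (x : X) (a : A), (S.M x a ⊗ₖ (1 : Matrix (Fin S.dB) (Fin S.dB) ℂ)).mulVec S.ψ
      = (S.M x a ⊗ₖ S.N x a).mulVec S.ψ := by
    intro x a
    have h1 : S.M x a ⊗ₖ (1 : Matrix (Fin S.dB) (Fin S.dB) ℂ) = ∑ b, S.M x a ⊗ₖ S.N x b := by
      rw [← st15_kron_sum, S.N_sum]
    rw [h1, st15_sum_mulVec, Fintype.sum_eq_single a (fun b hb => h0 x a b (Ne.symm hb))]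
  have hNM : ∀ (x : X) (a : A), ((1 : Matrix (Fin S.dA) (Fin S.dA) ℂ) ⊗ₖ S.N x a).mulVec S.ψ
      = (S.M x a ⊗ₖ S.N x a).mulVec S.ψ := by
    intro x a
    have h1 : (1 : Matrix (Fin S.dA) (Fin S.dA) ℂ) ⊗ₖ S.N x a = ∑ b, S.M x b ⊗ₖ S.N x a := by
      rw [← st15_sum_kron, S.M_sum]
    rw [h1, st15_sum_mulVec, Fintype.sum_eq_single a (fun b hb => h0 x b a hb)]
  have main : ∀ (x : X) (a : A),
      (S.M x a ⊗ₖ (1 : Matrix (Fin S.dB) (Fin S.dB) ℂ)).mulVec S.ψ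
        = ((1 : Matrix (Fin S.dA) (Fin S.dA) ℂ) ⊗ₖ S.N x a).mulVec S.ψ :=
    fun x a => (hMN x a).trans (hNM x a).symm
  refine ⟨main, fun hFR => ?_⟩
  constructor
  · intro x a
    refine ⟨(S.M_pos x a).1, ?_⟩
    set M := S.M x a with hMdef
    -- ((M*M - M) ⊗ 1) ψ = 0
    have key : ((M * M) ⊗ₖ (1 : Matrix (Fin S.dB) (Fin S.dB) ℂ)).mulVec S.ψ
        = (M ⊗ₖ (1 : Matrix (Fin S.dB) (Fin S.dB) ℂ)).mulVec S.ψ := by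
      have e1 : (M * M) ⊗ₖ (1 : Matrix (Fin S.dB) (Fin S.dB) ℂ)
          = (M ⊗ₖ (1 : Matrix (Fin S.dB) (Fin S.dB) ℂ))
            * (M ⊗ₖ (1 : Matrix (Fin S.dB) (Fin S.dB) ℂ)) := by
        rw [← Matrix.mul_kronecker_mul, Matrix.one_mul]
      have e2 : (M ⊗ₖ (1 : Matrix (Fin S.dB) (Fin S.dB) ℂ))
          * ((1 : Matrix (Fin S.dA) (Fin S.dA) ℂ) ⊗ₖ S.N x a) = M ⊗ₖ S.N x a := by
        rw [← Matrix.mul_kronecker_mul, Matrix.mul_one, Matrix.one_mul]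
      rw [e1, ← Matrix.mulVec_mulVec, main x a, Matrix.mulVec_mulVec, e2, ← hMN x a]
      exact main x a
    set T : Matrix (Fin S.dA) (Fin S.dA) ℂ := M * M - M with hT
    have hTherm : Tᴴ = T := by
      rw [hT, Matrix.conjTranspose_sub, Matrix.conjTranspose_mul, (S.M_pos x a).1.eq]
    have hTψ : (T ⊗ₖ (1 : Matrix (Fin S.dB) (Fin S.dB) ℂ)).mulVec S.ψ = 0 := by
      have : T ⊗ₖ (1 : Matrix (Fin S.dB) (Fin S.dB) ℂ)
          = (M * M) ⊗ₖ (1 : Matrix (Fin S.dB) (Fin S.dB) ℂ)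
            - M ⊗ₖ (1 : Matrix (Fin S.dB) (Fin S.dB) ℂ) := by
        ext ⟨i, j⟩ ⟨k, l⟩
        simp [hT, Matrix.kroneckerMap_apply, Matrix.sub_apply, sub_mul]
      rw [this, Matrix.sub_mulVec, key, sub_self]
    -- columns of ψ are killed by T
    have hcol : ∀ (i : Fin S.dA) (j : Fin S.dB), (∑ k, T i k * S.ψ (k, j)) = 0 := by
      intro i j
      have h := congrFun hTψ (i, j)
      simp only [Matrix.mulVec, dotProduct, Pi.zero_apply] at h
      rw [← h, Fintype.sum_prod_type]
      refine Finset.sum_congr rfl fun k _ => ?_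
      rw [Fintype.sum_eq_single j]
      · simp [Matrix.kroneckerMap_apply, Matrix.one_apply]
      · intro l hl
        simp [Matrix.kroneckerMap_apply, Matrix.one_apply, Ne.symm hl]
    have hTred : T * redA S.ψ = 0 := by
      ext i i'
      simp only [Matrix.mul_apply, redA, Matrix.of_apply, Matrix.zero_apply, Finset.mul_sum]
      rw [Finset.sum_comm]
      refine Finset.sum_eq_zero fun j _ => ?_
      have : (∑ k, T i k * (S.ψ (k, j) * star (S.ψ (i', j))))
          = (∑ k, T i k * S.ψ (k, j)) * star (S.ψ (i', j)) := by
        rw [Finset.sum_mul]; exact Finset.sum_congr rfl fun _ _ => by ring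
      rw [this, hcol, zero_mul]
    have hredT : redA S.ψ * T = 0 := by
      have hredherm : (redA S.ψ)ᴴ = redA S.ψ := by
        ext i i'
        simp [redA, Matrix.conjTranspose_apply, star_mul', mul_comm]
      calc redA S.ψ * T = (Tᴴ * (redA S.ψ)ᴴ)ᴴ := by
            rw [Matrix.conjTranspose_mul, Matrix.conjTranspose_conjTranspose,
              Matrix.conjTranspose_conjTranspose]
        _ = (T * redA S.ψ)ᴴ := by rw [hTherm, hredherm]
        _ = 0 := by rw [hTred, Matrix.conjTranspose_zero]
    have hTzero : T = 0 := by
      ext i k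
      have hv : T.mulVec (Pi.single k 1) = 0 := by
        apply hFR.1
        rw [Matrix.mulVec_mulVec, hredT, Matrix.zero_mulVec]
      have := congrFun hv i
      simpa using this
    exact sub_eq_zero.mp hTzero
  · intro x a
    refine ⟨(S.N_pos x a).1, ?_⟩
    set N := S.N x a with hNdef
    have key : ((1 : Matrix (Fin S.dA) (Fin S.dA) ℂ) ⊗ₖ (N * N)).mulVec S.ψ
        = ((1 : Matrix (Fin S.dA) (Fin S.dA) ℂ) ⊗ₖ N).mulVec S.ψ := by
      have e1 : (1 : Matrix (Fin S.dA) (Fin S.dA) ℂ) ⊗ₖ (N * N)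
          = ((1 : Matrix (Fin S.dA) (Fin S.dA) ℂ) ⊗ₖ N)
            * ((1 : Matrix (Fin S.dA) (Fin S.dA) ℂ) ⊗ₖ N) := by
        rw [← Matrix.mul_kronecker_mul, Matrix.one_mul]
      have e2 : ((1 : Matrix (Fin S.dA) (Fin S.dA) ℂ) ⊗ₖ N)
          * (S.M x a ⊗ₖ (1 : Matrix (Fin S.dB) (Fin S.dB) ℂ)) = S.M x a ⊗ₖ N := by
        rw [← Matrix.mul_kronecker_mul, Matrix.mul_one, Matrix.one_mul]
      rw [e1, ← Matrix.mulVec_mulVec, ← main x a, Matrix.mulVec_mulVec, e2, ← hNM x a]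
      exact (main x a).symm
    set T : Matrix (Fin S.dB) (Fin S.dB) ℂ := N * N - N with hT
    have hTherm : Tᴴ = T := by
      rw [hT, Matrix.conjTranspose_sub, Matrix.conjTranspose_mul, (S.N_pos x a).1.eq]
    have hTψ : ((1 : Matrix (Fin S.dA) (Fin S.dA) ℂ) ⊗ₖ T).mulVec S.ψ = 0 := by
      have : (1 : Matrix (Fin S.dA) (Fin S.dA) ℂ) ⊗ₖ T
          = (1 : Matrix (Fin S.dA) (Fin S.dA) ℂ) ⊗ₖ (N * N)
            - (1 : Matrix (Fin S.dA) (Fin S.dA) ℂ) ⊗ₖ N := by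
        ext ⟨i, j⟩ ⟨k, l⟩
        simp [hT, Matrix.kroneckerMap_apply, Matrix.sub_apply, mul_sub]
      rw [this, Matrix.sub_mulVec, key, sub_self]
    have hcol : ∀ (i : Fin S.dA) (j : Fin S.dB), (∑ l, T j l * S.ψ (i, l)) = 0 := by
      intro i j
      have h := congrFun hTψ (i, j)
      simp only [Matrix.mulVec, dotProduct, Pi.zero_apply] at h
      rw [← h, Fintype.sum_prod_type]
      rw [Fintype.sum_eq_single i]
      · simp [Matrix.kroneckerMap_apply, Matrix.one_apply]
      · intro k hk
        refine Finset.sum_eq_zero fun l _ => ?_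
        simp [Matrix.kroneckerMap_apply, Matrix.one_apply, Ne.symm hk]
    have hTred : T * redB S.ψ = 0 := by
      ext j j'
      simp only [Matrix.mul_apply, redB, Matrix.of_apply, Matrix.zero_apply, Finset.mul_sum]
      rw [Finset.sum_comm]
      refine Finset.sum_eq_zero fun i _ => ?_
      have : (∑ l, T j l * (S.ψ (i, l) * star (S.ψ (i, j'))))
          = (∑ l, T j l * S.ψ (i, l)) * star (S.ψ (i, j')) := by
        rw [Finset.sum_mul]; exact Finset.sum_congr rfl fun _ _ => by ring
      rw [this, hcol, zero_mul]
    have hredT : redB S.ψ * T = 0 := by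
      have hredherm : (redB S.ψ)ᴴ = redB S.ψ := by
        ext j j'
        simp [redB, Matrix.conjTranspose_apply, star_mul', mul_comm]
      calc redB S.ψ * T = (Tᴴ * (redB S.ψ)ᴴ)ᴴ := by
            rw [Matrix.conjTranspose_mul, Matrix.conjTranspose_conjTranspose,
              Matrix.conjTranspose_conjTranspose]
        _ = (T * redB S.ψ)ᴴ := by rw [hTherm, hredherm]
        _ = 0 := by rw [hTred, Matrix.conjTranspose_zero]
    have hTzero : T = 0 := by
      ext j l
      have hv : T.mulVec (Pi.single l 1) = 0 := by
        apply hFR.2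
        rw [Matrix.mulVec_mulVec, hredT, Matrix.zero_mulVec]
      have := congrFun hv j
      simpa using this
    exact sub_eq_zero.mp hTzero

end SelfTestPaper
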